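/- If f : [a,b] → ℝ is strongly φ-convex with modulus c > 0 for a continuous function φ : [a,b] → [a,b] with φ(a) < φ(b), then f((φ(a)+φ(b))/2) + (c/12)(φ(b)−φ(a))² ≤ (1/(φ(b)−φ(a))) ∫_{φ(a)}^{φ(b)} f(x) dx ≤ (f(φ(a))+f(φ(b)))/2 − (c/6)(φ(b)−φ(a))². -/

import Mathlib

open MeasureTheory Set

open intervalIntegral in
/-- Integral of a quadratic polynomial over an interval. -/
lemma quad_integral (A B p q r : ℝ) :
    ∫ x in A..B, (p*x^2 + q*x + r) = p*(B^3-A^3)/3 + q*(B^2-A^2)/2 + r*(B-A) := by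
  have h1 : IntervalIntegrable (fun x : ℝ => p*x^2) volume A B :=
    (by fun_prop : Continuous fun x : ℝ => p*x^2).intervalIntegrable _ _
  have h2 : IntervalIntegrable (fun x : ℝ => q*x) volume A B :=
    (by fun_prop : Continuous fun x : ℝ => q*x).intervalIntegrable _ _
  have h3 : IntervalIntegrable (fun x : ℝ => r) volume A B := intervalIntegrable_const
  rw [intervalIntegral.integral_add (h1.add h2) h3, intervalIntegral.integral_add h1 h2,
    intervalIntegral.integral_const_mul, intervalIntegral.integral_const_mul,
    integral_pow, integral_id, intervalIntegral.integral_const]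
  rw [smul_eq_mul]
  push_cast
  ring

theorem stmt0 (a b c : ℝ) (hab : a < b) (hc : 0 < c)
    (f : ℝ → ℝ)
    (φ : ℝ → ℝ) (hφmap : MapsTo φ (Icc a b) (Icc a b))
    (hφcont : ContinuousOn φ (Icc a b)) (hφab : φ a < φ b)
    (hconv : ∀ x ∈ Icc a b, ∀ y ∈ Icc a b, ∀ t ∈ Icc (0:ℝ) 1,
      f (t * φ x + (1 - t) * φ y) ≤
        t * f (φ x) + (1 - t) * f (φ y) - c * t * (1 - t) * (φ x - φ y) ^ 2) :
    f ((φ a + φ b) / 2) + c / 12 * (φ b - φ a) ^ 2 ≤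
        (1 / (φ b - φ a)) * (∫ x in (φ a)..(φ b), f x) ∧
      (1 / (φ b - φ a)) * (∫ x in (φ a)..(φ b), f x) ≤
        (f (φ a) + f (φ b)) / 2 - c / 6 * (φ b - φ a) ^ 2 := by
  set A := φ a with hAdef
  set B := φ b with hBdef
  have hAB : A < B := hφab
  have hBA : (0:ℝ) < B - A := by linarith
  have ha : a ∈ Icc a b := ⟨le_refl _, hab.le⟩
  have hb : b ∈ Icc a b := ⟨hab.le, le_refl _⟩
  -- every point of [A,B] is a φ-image
  have hsurj : Icc A B ⊆ φ '' (Icc a b) :=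
    intermediate_value_Icc hab.le hφcont
  -- strong convexity pointwise on [A,B]
  have hkey : ∀ u ∈ Icc A B, ∀ v ∈ Icc A B, ∀ t ∈ Icc (0:ℝ) 1,
      f (t * u + (1 - t) * v) ≤ t * f u + (1 - t) * f v - c * t * (1 - t) * (u - v) ^ 2 := by
    intro u hu v hv t ht
    obtain ⟨x, hx, rfl⟩ := hsurj hu
    obtain ⟨y, hy, rfl⟩ := hsurj hv
    exact hconv x hx y hy t ht
  -- f is convex on [A,B]
  have hfconv : ConvexOn ℝ (Icc A B) f := by
    refine ⟨convex_Icc _ _, ?_⟩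
    intro x hx y hy s t hs ht hst
    have h := hkey x hx y hy s ⟨hs, by linarith⟩
    have h0 : 0 ≤ c * s * (1 - s) * (x - y) ^ 2 :=
      mul_nonneg (mul_nonneg (mul_nonneg hc.le hs) (by linarith)) (sq_nonneg _)
    have ht' : t = 1 - s := by linarith
    simp only [smul_eq_mul, ht']
    nlinarith [h]
  -- upper bound and lower bound for f on [A,B]
  set M := max (f A) (f B) with hMdef
  have hub : ∀ x ∈ Icc A B, f x ≤ M := by
    intro x hx
    have htmem : (B - x)/(B - A) ∈ Icc (0:ℝ) 1 := by
      constructor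
      · exact div_nonneg (by linarith [hx.2]) hBA.le
      · rw [div_le_one hBA]; linarith [hx.1]
    have h := hkey A (left_mem_Icc.2 hAB.le) B (right_mem_Icc.2 hAB.le) _ htmem
    have hx' : (B - x)/(B - A) * A + (1 - (B - x)/(B - A)) * B = x := by
      field_simp
      ring
    rw [hx'] at h
    have h0 : 0 ≤ c * ((B - x)/(B - A)) * (1 - (B - x)/(B - A)) * (A - B) ^ 2 := by
      have h1 : 0 ≤ (B - x)/(B - A) := htmem.1
      have h2 : 0 ≤ 1 - (B - x)/(B - A) := by linarith [htmem.2]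
      exact mul_nonneg (mul_nonneg (mul_nonneg hc.le h1) h2) (sq_nonneg _)
    have hA' : f A ≤ M := le_max_left _ _
    have hB' : f B ≤ M := le_max_right _ _
    nlinarith [htmem.1, htmem.2]
  -- midpoint inequality
  have hmid : ∀ x ∈ Icc A B,
      f ((A + B)/2) ≤ (f x + f (A + B - x))/2 - c/4 * (2*x - A - B) ^ 2 := by
    intro x hx
    have hx' : A + B - x ∈ Icc A B := ⟨by linarith [hx.2], by linarith [hx.1]⟩
    have h := hkey x hx (A + B - x) hx' (1/2) (by norm_num)
    have e1 : (1:ℝ)/2 * x + (1 - 1/2) * (A + B - x) = (A + B)/2 := by ring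
    rw [e1] at h
    nlinarith [h]
  have hlb : ∀ x ∈ Icc A B, 2 * f ((A + B)/2) - M ≤ f x := by
    intro x hx
    have hx' : A + B - x ∈ Icc A B := ⟨by linarith [hx.2], by linarith [hx.1]⟩
    have h := hmid x hx
    have h2 := hub _ hx'
    nlinarith [sq_nonneg (2*x - A - B)]
  -- integrability of f on [A,B]
  have hint : IntervalIntegrable f volume A B := by
    rw [intervalIntegrable_iff_integrableOn_Icc_of_le hAB.le,
      integrableOn_Icc_iff_integrableOn_Ioo]
    have hcont : ContinuousOn f (Ioo A B) :=
      (hfconv.subset Ioo_subset_Icc_self (convex_Ioo _ _)).continuousOn isOpen_Ioo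
    have hmeas : AEStronglyMeasurable f (volume.restrict (Ioo A B)) :=
      hcont.aestronglyMeasurable measurableSet_Ioo
    set K := max |M| |2 * f ((A + B)/2) - M| with hKdef
    have hKint : IntegrableOn (fun _ : ℝ => K) (Ioo A B) volume :=
      integrableOn_const measure_Ioo_lt_top.ne
    refine Integrable.mono' hKint hmeas ?_
    filter_upwards [ae_restrict_mem measurableSet_Ioo] with x hx
    have h1 := hub x (Ioo_subset_Icc_self hx)
    have h2 := hlb x (Ioo_subset_Icc_self hx)
    rw [Real.norm_eq_abs, abs_le]
    constructor
    · have := neg_abs_le (2 * f ((A + B)/2) - M)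
      have := le_max_right |M| |2 * f ((A + B)/2) - M|
      linarith
    · have := le_abs_self M
      have := le_max_left |M| |2 * f ((A + B)/2) - M|
      linarith
  -- integrability of the reflected function
  have hint2 : IntervalIntegrable (fun x => f (A + B - x)) volume A B := by
    have h2 := hint.comp_sub_left (A + B)
    have e1 : A + B - A = B := by ring
    have e2 : A + B - B = A := by ring
    rw [e1, e2] at h2
    exact h2.symm
  -- value of the reflected integral
  have hrefl : ∫ x in A..B, f (A + B - x) = ∫ x in A..B, f x := by
    rw [intervalIntegral.integral_comp_sub_left f (A + B)]
    norm_num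
  constructor
  · -- lower Hermite–Hadamard bound
    have hpt : ∀ x ∈ Icc A B,
        f ((A + B)/2) ≤ (f x + f (A + B - x))/2 - c/4 * (2*x - A - B) ^ 2 := hmid
    have hRint : IntervalIntegrable
        (fun x => (f x + f (A + B - x))/2 - c/4 * (2*x - A - B) ^ 2) volume A B := by
      refine ((hint.add hint2).div_const 2).sub ?_
      exact (by fun_prop : Continuous fun x : ℝ => c/4 * (2*x - A - B) ^ 2).intervalIntegrable _ _
    have hmono := intervalIntegral.integral_mono_on hAB.le
      (intervalIntegrable_const (c := f ((A + B)/2))) hRint hpt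
    rw [intervalIntegral.integral_const, smul_eq_mul] at hmono
    have hsplit : ∫ x in A..B, ((f x + f (A + B - x))/2 - c/4 * (2*x - A - B) ^ 2)
        = (∫ x in A..B, f x) - c/4 * ((B - A)^3/3) := by
      rw [intervalIntegral.integral_sub ((hint.add hint2).div_const 2)
        ((by fun_prop : Continuous fun x : ℝ => c/4 * (2*x - A - B) ^ 2).intervalIntegrable _ _)]
      have e3 : (fun x : ℝ => c/4 * (2*x - A - B) ^ 2)
          = fun x : ℝ => c*x^2 + (-c*(A + B))*x + (c/4*(A + B)^2) := by
        funext x; ring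
      rw [e3, quad_integral]
      have e4 : ∫ x in A..B, (f x + f (A + B - x))/2
          = ((∫ x in A..B, f x) + ∫ x in A..B, f (A + B - x))/2 := by
        rw [intervalIntegral.integral_div, intervalIntegral.integral_add hint hint2]
      rw [e4, hrefl]
      ring
    rw [hsplit] at hmono
    -- multiply by 1/(B-A)
    have hfin := mul_le_mul_of_nonneg_left hmono (by positivity : (0:ℝ) ≤ 1/(B - A))
    have e5 : 1/(B - A) * ((B - A) * f ((A + B)/2)) = f ((A + B)/2) := by
      field_simp
    have e6 : 1/(B - A) * ((∫ x in A..B, f x) - c/4 * ((B - A)^3/3))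
        = 1/(B - A) * (∫ x in A..B, f x) - c/12 * (B - A)^2 := by
      field_simp
      ring
    rw [e5, e6] at hfin
    linarith
  · -- upper Hermite–Hadamard bound
    have hpt : ∀ x ∈ Icc A B,
        f x ≤ ((B - x) * f A + (x - A) * f B)/(B - A) - c * (B - x) * (x - A) := by
      intro x hx
      have htmem : (B - x)/(B - A) ∈ Icc (0:ℝ) 1 := by
        constructor
        · exact div_nonneg (by linarith [hx.2]) hBA.le
        · rw [div_le_one hBA]; linarith [hx.1]
      have h := hkey A (left_mem_Icc.2 hAB.le) B (right_mem_Icc.2 hAB.le) _ htmem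
      have hx' : (B - x)/(B - A) * A + (1 - (B - x)/(B - A)) * B = x := by
        field_simp; ring
      rw [hx'] at h
      have e7 : (B - x)/(B - A) * f A + (1 - (B - x)/(B - A)) * f B
          - c * ((B - x)/(B - A)) * (1 - (B - x)/(B - A)) * (A - B) ^ 2
          = ((B - x) * f A + (x - A) * f B)/(B - A) - c * (B - x) * (x - A) := by
        field_simp
        ring
      linarith [h, e7.symm.le, e7.le]
    have hRint : IntervalIntegrable
        (fun x => ((B - x) * f A + (x - A) * f B)/(B - A) - c * (B - x) * (x - A)) volume A B :=
      (by fun_prop : Continuous fun x : ℝ =>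
        ((B - x) * f A + (x - A) * f B)/(B - A) - c * (B - x) * (x - A)).intervalIntegrable _ _
    have hmono := intervalIntegral.integral_mono_on hAB.le hint hRint hpt
    have hval : ∫ x in A..B, (((B - x) * f A + (x - A) * f B)/(B - A) - c * (B - x) * (x - A))
        = (B - A) * ((f A + f B)/2 - c/6 * (B - A)^2) := by
      have e3 : (fun x : ℝ => ((B - x) * f A + (x - A) * f B)/(B - A) - c * (B - x) * (x - A))
          = fun x : ℝ => c*x^2 + ((f B - f A)/(B - A) - c*(A + B))*x
              + ((B * f A - A * f B)/(B - A) + c*A*B) := by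
        funext x
        field_simp
        ring
      rw [e3, quad_integral]
      field_simp
      ring
    rw [hval] at hmono
    have hfin := mul_le_mul_of_nonneg_left hmono (by positivity : (0:ℝ) ≤ 1/(B - A))
    have e8 : 1/(B - A) * ((B - A) * ((f A + f B)/2 - c/6 * (B - A)^2))
        = (f A + f B)/2 - c/6 * (B - A)^2 := by
      field_simp
    rw [e8] at hfin
    linarith
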